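/- arXiv:1107.1735 — 3 statements merged into one kernel-verified Lean document; each statement's English description precedes it below -/
import Mathlib

section
/- Let G be a finite simple graph and let r_1, …, r_k be natural numbers such that r_1 + r_2 + … + r_k ≥ Δ(G) + 1 − k, where Δ(G) denotes the maximum degree of G. Then the vertex set V(G) can be partitioned into sets V_1, …, V_k such that for each i ∈ {1, …, k}, the maximum degree of the induced subgraph G[V_i] is at most r_i. -/
open scoped Classical

/-- **Lovász's decomposition lemma.**  If `r₁ + ⋯ + r_k ≥ Δ(G) + 1 - k`, then the vertex
set of `G` can be partitioned into sets `V₁, …, V_k` with `Δ(G[Vᵢ]) ≤ rᵢ` for each `i`. -/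
theorem lovasz_partition {V : Type*} [Fintype V] (G : SimpleGraph V)
    (k : ℕ) (r : Fin k → ℕ)
    (hsum : G.maxDegree + 1 ≤ ∑ i, r i + k) :
    ∃ P : Fin k → Finset V,
      (∀ i j, i ≠ j → Disjoint (P i) (P j)) ∧
      (∀ v : V, ∃ i, v ∈ P i) ∧
      ∀ i : Fin k, (G.induce (↑(P i) : Set V)).maxDegree ≤ r i := by
  classical
  rcases Nat.eq_zero_or_pos k with hk0 | hk0
  · subst hk0
    simp at hsum
  haveI : Nonempty (Fin k) := ⟨⟨0, hk0⟩⟩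
  -- number of neighbours of `v` in class `i` under assignment `f`
  set d : (V → Fin k) → V → Fin k → ℕ :=
    fun f v i => ((G.neighborFinset v).filter (fun w => f w = i)).card with hd
  have hdsum : ∀ (f : V → Fin k) (v : V), ∑ i, d f v i = G.degree v := by
    intro f v
    exact (Finset.card_eq_sum_card_fiberwise (fun x _ => Finset.mem_univ (f x))).symm
  set S : ℤ := ∑ i, (r i : ℤ) with hS
  set χ : (V → Fin k) → V → V → ℤ :=
    fun f u w => if G.Adj u w ∧ f u = f w then 1 else 0 with hχ
  set Φ : (V → Fin k) → ℤ := fun f =>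
    (∑ u : V, ∑ w : V, χ f u w) + 2 * ∑ u : V, (S - r (f u)) with hΦ
  obtain ⟨f, -, hmin⟩ := Finset.exists_min_image (Finset.univ : Finset (V → Fin k)) Φ
    ⟨fun _ => ⟨0, hk0⟩, Finset.mem_univ _⟩
  -- conversion of indicator sums to the counts `d`
  have hcard : ∀ (h : V → Fin k) (v : V) (i : Fin k),
      (∑ w : V, if G.Adj v w ∧ h w = i then (1:ℤ) else 0) = d h v i := by
    intro h v i
    have e : (G.neighborFinset v).filter (fun w => h w = i)
        = Finset.univ.filter (fun w => G.Adj v w ∧ h w = i) := by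
      rw [SimpleGraph.neighborFinset_eq_filter, Finset.filter_filter]
    show _ = (((G.neighborFinset v).filter (fun w => h w = i)).card : ℤ)
    rw [Finset.sum_boole, e]
  -- the key property of the minimizing assignment
  have key : ∀ v, d f v (f v) ≤ r (f v) := by
    intro v
    by_contra hv
    push_neg at hv
    have hj : ∃ j, d f v j ≤ r j := by
      by_contra hj
      push_neg at hj
      have h1 : ∑ j, (r j + 1) ≤ ∑ j, d f v j := Finset.sum_le_sum (fun j _ => hj j)
      rw [hdsum] at h1
      have h2 : G.degree v ≤ G.maxDegree := G.degree_le_maxDegree v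
      have h3 : ∑ j : Fin k, (r j + 1) = ∑ j, r j + k := by
        rw [Finset.sum_add_distrib]; simp
      omega
    obtain ⟨j, hj⟩ := hj
    have hjv : j ≠ f v := by rintro rfl; omega
    set g := Function.update f v j with hg
    have hgu : ∀ u, u ≠ v → g u = f u := fun u hu => Function.update_of_ne hu _ _
    have hgv : g v = j := Function.update_self _ _ _
    -- row at v
    have hrow : ∀ w, χ g v w = (if G.Adj v w ∧ f w = j then (1:ℤ) else 0) := by
      intro w
      by_cases hw : w = v
      · subst hw; simp [hχ]
      · show (if G.Adj v w ∧ g v = g w then (1:ℤ) else 0) = _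
        rw [hgu w hw, hgv]
        exact if_congr (and_congr_right' eq_comm) rfl rfl
    -- column at v
    have hcol : ∀ u, χ g u v = (if G.Adj v u ∧ f u = j then (1:ℤ) else 0) := by
      intro u
      by_cases hu : u = v
      · subst hu; simp [hχ]
      · show (if G.Adj u v ∧ g u = g v then (1:ℤ) else 0) = _
        rw [hgu u hu, hgv]
        exact if_congr (and_congr_left' (G.adj_comm u v)) rfl rfl
    have hcolf : ∀ u, χ f u v = (if G.Adj v u ∧ f u = f v then (1:ℤ) else 0) := by
      intro u
      show (if G.Adj u v ∧ f u = f v then (1:ℤ) else 0) = _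
      exact if_congr (and_congr_left' (G.adj_comm u v)) rfl rfl
    have hrowf : ∀ w, χ f v w = (if G.Adj v w ∧ f w = f v then (1:ℤ) else 0) := by
      intro w
      show (if G.Adj v w ∧ f v = f w then (1:ℤ) else 0) = _
      exact if_congr (and_congr_right' eq_comm) rfl rfl
    -- difference of the quadratic part
    have hzero : ∀ u w, u ≠ v → w ≠ v → χ g u w - χ f u w = 0 := by
      intro u w hu hw
      rw [hχ]; simp only [hgu u hu, hgu w hw, sub_self]
    have hA : (∑ u : V, ∑ w : V, χ g u w) - (∑ u : V, ∑ w : V, χ f u w)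
        = 2 * ((d f v j : ℤ) - d f v (f v)) := by
      have e1 : ∑ u : V, ∑ w : V, (χ g u w - χ f u w)
          = (∑ u : V, ∑ w : V, χ g u w) - (∑ u : V, ∑ w : V, χ f u w) := by
        rw [← Finset.sum_sub_distrib]
        exact Finset.sum_congr rfl fun u _ => by rw [Finset.sum_sub_distrib]
      have e2 : ∀ u, u ≠ v → ∑ w : V, (χ g u w - χ f u w) = χ g u v - χ f u v := by
        intro u hu
        exact Finset.sum_eq_single_of_mem v (Finset.mem_univ v)
          (fun w _ hw => hzero u w hu hw)
      have e3 : ∑ u : V, ∑ w : V, (χ g u w - χ f u w)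
          = (∑ w : V, (χ g v w - χ f v w)) + ∑ u ∈ Finset.univ.erase v, (χ g u v - χ f u v) := by
        rw [← Finset.add_sum_erase _ _ (Finset.mem_univ v)]
        congr 1
        exact Finset.sum_congr rfl fun u hu => e2 u (Finset.ne_of_mem_erase hu)
      have e4 : ∑ u ∈ Finset.univ.erase v, (χ g u v - χ f u v)
          = ∑ u : V, (χ g u v - χ f u v) := by
        rw [← Finset.add_sum_erase _ _ (Finset.mem_univ v)]
        have : χ g v v - χ f v v = 0 := by simp [hχ]
        rw [this, zero_add]
      have hrowsum : ∑ w : V, (χ g v w - χ f v w) = (d f v j : ℤ) - d f v (f v) := by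
        rw [Finset.sum_sub_distrib]
        rw [Finset.sum_congr rfl fun w _ => hrow w,
          Finset.sum_congr rfl fun w _ => hrowf w, hcard, hcard]
      have hcolsum : ∑ u : V, (χ g u v - χ f u v) = (d f v j : ℤ) - d f v (f v) := by
        rw [Finset.sum_sub_distrib]
        rw [Finset.sum_congr rfl fun u _ => hcol u,
          Finset.sum_congr rfl fun u _ => hcolf u, hcard, hcard]
      rw [← e1, e3, e4, hrowsum, hcolsum]; ring
    -- difference of the linear part
    have hB : (∑ u : V, (S - r (g u))) - (∑ u : V, (S - r (f u)))
        = (r (f v) : ℤ) - r j := by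
      have e1 : (fun u => S - (r (g u) : ℤ))
          = Function.update (fun u => S - (r (f u) : ℤ)) v (S - r j) := by
        funext u
        by_cases hu : u = v
        · subst hu; rw [hgv, Function.update_self]
        · rw [hgu u hu, Function.update_of_ne hu]
      rw [e1, Finset.sum_update_of_mem (Finset.mem_univ v)]
      rw [← Finset.add_sum_erase _ (fun u => S - (r (f u) : ℤ)) (Finset.mem_univ v),
        Finset.sdiff_singleton_eq_erase]
      ring
    have hΦdiff : Φ g - Φ f = 2 * ((d f v j : ℤ) - d f v (f v)) + 2 * ((r (f v) : ℤ) - r j) := by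
      have hg' : Φ g = (∑ u : V, ∑ w : V, χ g u w) + 2 * ∑ u : V, (S - r (g u)) := rfl
      have hf' : Φ f = (∑ u : V, ∑ w : V, χ f u w) + 2 * ∑ u : V, (S - r (f u)) := rfl
      rw [hg', hf']
      linarith [hA, hB]
    have hlt : Φ g < Φ f := by
      have h1 : (d f v j : ℤ) ≤ r j := by exact_mod_cast hj
      have h2 : (r (f v) : ℤ) + 1 ≤ d f v (f v) := by exact_mod_cast hv
      linarith
    exact absurd (hmin g (Finset.mem_univ g)) (not_le.mpr hlt)
  -- build the partition
  refine ⟨fun i => Finset.univ.filter (fun v => f v = i), ?_, fun v => ⟨f v, by simp⟩, ?_⟩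
  · intro i j hij
    rw [Finset.disjoint_left]
    intro a ha hb
    rw [Finset.mem_filter] at ha hb
    exact hij (ha.2 ▸ hb.2 ▸ rfl)
  · intro i
    apply SimpleGraph.maxDegree_le_of_forall_degree_le
    intro x
    have hx : f x.1 = i := by
      have := x.2
      simp only [Finset.coe_filter, Set.mem_setOf_eq] at this
      exact this.2
    show ((G.induce _).neighborFinset x).card ≤ r i
    calc ((G.induce _).neighborFinset x).card
        ≤ ((G.neighborFinset x.1).filter (fun w => f w = i)).card := by
          apply Finset.card_le_card_of_injOn Subtype.val
          · intro y hy
            rw [Finset.mem_coe, SimpleGraph.mem_neighborFinset] at hy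
            have hadj : G.Adj x.1 y.1 := by simpa using hy
            have hyi : f y.1 = i := by
              have := y.2
              simp only [Finset.coe_filter, Set.mem_setOf_eq] at this
              exact this.2
            rw [Finset.mem_coe, Finset.mem_filter, SimpleGraph.mem_neighborFinset]
            exact ⟨hadj, hyi⟩
          · exact Subtype.val_injective.injOn
      _ = d f x.1 i := rfl
      _ ≤ r i := by have h := key x.1; rw [hx] at h; exact h
end

section
/- Let r be a natural number with r ≥ 2. Define h : 𝒢 → ℕ on the collection 𝒢 of all finite simple connected graphs by h(G) = 1 if G is r-regular and not a complete graph, and h(G) = 0 otherwise. Then h is an r-height function. -/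
open scoped Classical

universe u

/-- A "height function" assigns a natural number to every finite simple graph
(its values are only relevant on connected graphs, the collection `𝒢`). -/
def HeightFun : Type (u + 1) := ∀ (α : Type u) [Fintype α], SimpleGraph α → ℕ

/-- A vertex `x` of a connected graph `G` is `h`-critical if `G - x` is connected and
nonempty and `h (G - x) < h G`. -/
def IsHCritical (h : HeightFun.{u}) {α : Type u} [Fintype α]
    (G : SimpleGraph α) (x : α) : Prop :=
  (G.induce {y | y ≠ x}).Connected ∧
    h _ (G.induce {y | y ≠ x}) < h _ G

/-- A pair of vertices `{x, y}` of `G` is an `h`-critical pair if `G - {x, y}` is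
connected and nonempty, `x` is `h`-critical in `G - y` and `y` is `h`-critical in
`G - x`. -/
def IsHCriticalPair (h : HeightFun.{u}) {α : Type u} [Fintype α]
    (G : SimpleGraph α) (x y : α) : Prop :=
  ∃ hxy : x ≠ y,
    (G.induce {z | z ≠ x ∧ z ≠ y}).Connected ∧
    IsHCritical h (G.induce {z | z ≠ y}) ⟨x, hxy⟩ ∧
    IsHCritical h (G.induce {z | z ≠ x}) ⟨y, hxy.symm⟩

/-- `h` is an `r`-height function if it satisfies the four properties from the paper,
for every finite simple connected graph `G`. -/
def IsRHeightFun (r : ℕ) (h : HeightFun.{u}) : Prop :=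
  (∀ (α : Type u) [Fintype α] (G : SimpleGraph α), G.Connected → 0 < h _ G →
      ∃ x : α, IsHCritical h G x ∧ r ≤ G.degree x) ∧
  (∀ (α : Type u) [Fintype α] (G : SimpleGraph α) (x : α), G.Connected →
      IsHCritical h G x → r ≤ G.degree x →
      h _ (G.induce {y | y ≠ x}) = h _ G - 1) ∧
  (∀ (α : Type u) [Fintype α] (G : SimpleGraph α) (x : α), G.Connected →
      IsHCritical h G x → r ≤ G.degree x →
      ∃ y : α, IsHCritical h G y ∧ r ≤ G.degree y ∧ y ≠ x ∧ ¬ G.Adj x y) ∧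
  (∀ (α : Type u) [Fintype α] (G : SimpleGraph α) (x y : α), G.Connected →
      IsHCriticalPair h G x y →
      r ≤ ((G.neighborFinset x).erase y).card →
      r ≤ ((G.neighborFinset y).erase x).card →
      ∃ z : α, G.Adj x z ∧ G.Adj y z ∧ r + 1 ≤ G.degree z)

/-- The degree of a vertex in the graph obtained by deleting the vertex `x`. -/
lemma degree_induce_ne {α : Type u} [Fintype α] (G : SimpleGraph α) (x w : α) (hw : w ≠ x)
    [Fintype ((G.induce {y | y ≠ x}).neighborSet ⟨w, hw⟩)] :
    (G.induce {y | y ≠ x}).degree ⟨w, hw⟩ = ((G.neighborFinset w).erase x).card := by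
  classical
  refine Finset.card_bij
    (fun (v : {y | y ≠ x}) (_ : v ∈ (G.induce {y | y ≠ x}).neighborFinset ⟨w, hw⟩) => (v : α))
    ?_ ?_ ?_
  · intro v hv
    simp only [SimpleGraph.mem_neighborFinset] at hv
    simp only [Finset.mem_erase, SimpleGraph.mem_neighborFinset]
    exact ⟨v.2, by simpa using hv⟩
  · intro a _ b _ h
    exact Subtype.ext h
  · intro v hv
    simp only [Finset.mem_erase, SimpleGraph.mem_neighborFinset] at hv
    exact ⟨⟨v, hv.1⟩, by simp [SimpleGraph.mem_neighborFinset, hv.2], rfl⟩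

/-- Deleting a vertex of maximal distance from `x` keeps the graph connected. -/
lemma connected_induce_of_max' {α : Type u} [Fintype α] {G : SimpleGraph α} (hc : G.Connected)
    {x y : α} (hxy : x ≠ y) (hmax : ∀ z, G.dist x z ≤ G.dist x y) :
    (G.induce {z | z ≠ y}).Connected := by
  classical
  have key : ∀ n (z : α) (hz : z ≠ y), G.dist x z = n →
      (G.induce {w | w ≠ y}).Reachable ⟨x, hxy⟩ ⟨z, hz⟩ := by
    intro n
    induction n using Nat.strong_induction_on with
    | _ n ih =>
      intro z hz hdz
      rcases Nat.eq_zero_or_pos n with h0 | hpos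
      · subst h0
        have : x = z := ((hc x z).dist_eq_zero_iff).mp hdz
        subst this
        exact SimpleGraph.Reachable.refl _
      · have hzx : z ≠ x := by
          intro h; subst h; rw [SimpleGraph.dist_self] at hdz; omega
        obtain ⟨p, hp⟩ := (hc x z).exists_walk_length_eq_dist
        obtain ⟨w, hadj, q, hq⟩ := SimpleGraph.Walk.exists_eq_cons_of_ne hzx p.reverse
        have hql : q.length = n - 1 := by
          have := congrArg SimpleGraph.Walk.length hq
          simp [SimpleGraph.Walk.length_reverse, hp, hdz] at this
          omega
        have hdw_le : G.dist x w ≤ n - 1 := by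
          have := SimpleGraph.dist_le q.reverse
          rwa [SimpleGraph.Walk.length_reverse, hql] at this
        have hdw_ge : n - 1 ≤ G.dist x w := by
          have h1 : G.dist x z ≤ G.dist x w + G.dist w z := hc.dist_triangle
          have h2 : G.dist w z ≤ 1 := by
            have := SimpleGraph.dist_le (SimpleGraph.Walk.cons hadj.symm SimpleGraph.Walk.nil)
            simpa using this
          omega
        have hdw : G.dist x w = n - 1 := le_antisymm hdw_le hdw_ge
        have hwy : w ≠ y := by
          intro h; subst h
          have := hmax z
          rw [hdz] at this
          omega
        have hr : (G.induce {w | w ≠ y}).Reachable ⟨x, hxy⟩ ⟨w, hwy⟩ :=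
          ih (n-1) (by omega) w hwy hdw
        refine hr.trans (SimpleGraph.Adj.reachable ?_)
        simp only [SimpleGraph.comap_adj, Function.Embedding.coe_subtype]
        exact hadj.symm
  rw [SimpleGraph.connected_iff]
  refine ⟨?_, ⟨⟨x, hxy⟩⟩⟩
  intro a b
  have ha := key (G.dist x a) a a.2 rfl
  have hb := key (G.dist x b) b b.2 rfl
  exact ha.symm.trans hb

/-- Deleting a vertex with a neighbor from an `r`-regular graph (`r ≥ 1`)
destroys `r`-regularity. -/
lemma not_isRegular_induce' {α : Type u} [Fintype α] {G : SimpleGraph α} {r : ℕ}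
    (hreg : G.IsRegularOfDegree r) (hr : 1 ≤ r) {x w : α} (hadj : G.Adj x w) :
    ¬ (G.induce {y | y ≠ x}).IsRegularOfDegree r := by
  classical
  intro h
  have hw := h ⟨w, hadj.ne'⟩
  rw [degree_induce_ne] at hw
  rw [Finset.card_erase_of_mem (by rw [SimpleGraph.mem_neighborFinset]; exact hadj.symm)] at hw
  have hdw : (G.neighborFinset w).card = r := hreg w
  omega

/-- In a non-complete regular graph, every vertex has a non-neighbor. -/
lemma exists_nonadj' {α : Type u} [Fintype α] {G : SimpleGraph α} {r : ℕ}
    (hreg : G.IsRegularOfDegree r) (hne : G ≠ ⊤) (x : α) :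
    ∃ v, v ≠ x ∧ ¬ G.Adj x v := by
  classical
  by_contra hcon
  push_neg at hcon
  apply hne
  have hNx : G.neighborFinset x = Finset.univ.erase x := by
    ext v
    simp only [SimpleGraph.mem_neighborFinset, Finset.mem_erase, Finset.mem_univ, and_true]
    exact ⟨fun h => h.ne', fun h => hcon v h⟩
  have hcard : r = Fintype.card α - 1 := by
    have hx : (G.neighborFinset x).card = r := hreg x
    rw [hNx, Finset.card_erase_of_mem (Finset.mem_univ x), Finset.card_univ] at hx
    omega
  ext u v
  simp only [SimpleGraph.top_adj]
  constructor
  · exact fun h => h.ne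
  · intro huv
    have hsub : G.neighborFinset u ⊆ Finset.univ.erase u := by
      intro a ha
      simp only [Finset.mem_erase, Finset.mem_univ, and_true]
      exact ((SimpleGraph.mem_neighborFinset _ _ _).mp ha).ne'
    have hle : (Finset.univ.erase u).card ≤ (G.neighborFinset u).card := by
      have hu : (G.neighborFinset u).card = r := hreg u
      rw [hu, Finset.card_erase_of_mem (Finset.mem_univ u), Finset.card_univ]
      have hpos : 0 < Fintype.card α := Fintype.card_pos_iff.mpr ⟨u⟩
      omega
    have heq := Finset.eq_of_subset_of_card_le hsub hle
    have : v ∈ G.neighborFinset u := by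
      rw [heq]
      simp [Ne.symm huv]
    rwa [SimpleGraph.mem_neighborFinset] at this

/-- From positivity below an `if _ then 1 else 0`, extract the condition. -/
lemma cond_of_lt' {P : Prop} [Decidable P] {m : ℕ} (h : m < if P then 1 else 0) :
    P ∧ m = 0 := by
  by_cases hp : P
  · rw [if_pos hp] at h; exact ⟨hp, by omega⟩
  · rw [if_neg hp] at h; omega

/-- For `r ≥ 2`, the function giving `1` on non-complete `r`-regular graphs and `0`
otherwise is an `r`-height function. -/
theorem isRHeightFun_of_regular_noncomplete (r : ℕ) (hr : 2 ≤ r) :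
    IsRHeightFun.{u} r
      (fun α [Fintype α] (G : SimpleGraph α) =>
        if G.IsRegularOfDegree r ∧ G ≠ ⊤ then 1 else 0) := by
  classical
  have main : ∀ (α : Type u) [Fintype α] (G : SimpleGraph α), G.Connected →
      G.IsRegularOfDegree r → G ≠ ⊤ → ∀ x : α, ∃ y : α, y ≠ x ∧
      (∀ z, G.dist x z ≤ G.dist x y) ∧
      IsHCritical (fun α [Fintype α] (G : SimpleGraph α) =>
        if G.IsRegularOfDegree r ∧ G ≠ ⊤ then 1 else 0) G y := by
    intro α _ G hc hreg hne x
    obtain ⟨y, -, hmax⟩ := Finset.exists_max_image Finset.univ (G.dist x)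
      ⟨x, Finset.mem_univ x⟩
    have hmax' : ∀ z, G.dist x z ≤ G.dist x y := fun z => hmax z (Finset.mem_univ z)
    obtain ⟨v, hvx, hvnadj⟩ := exists_nonadj' hreg hne x
    have hdv : 2 ≤ G.dist x v := by
      have h0 : G.dist x v ≠ 0 := fun h => hvx (((hc x v).dist_eq_zero_iff).mp h).symm
      have h1 : G.dist x v ≠ 1 := fun h => hvnadj (SimpleGraph.dist_eq_one_iff_adj.mp h)
      omega
    have hxy : x ≠ y := by
      intro h
      have := hmax' v
      rw [← h, SimpleGraph.dist_self] at this
      omega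
    refine ⟨y, hxy.symm, hmax', connected_induce_of_max' hc hxy hmax', ?_⟩
    obtain ⟨w, hw⟩ : ∃ w, G.Adj y w := by
      have hdy : (G.neighborFinset y).card = r := hreg y
      have : (G.neighborFinset y).Nonempty := Finset.card_pos.mp (by omega)
      obtain ⟨w, hwmem⟩ := this
      exact ⟨w, (SimpleGraph.mem_neighborFinset _ _ _).mp hwmem⟩
    have hnotreg := not_isRegular_induce' hreg (by omega) hw
    show (if (G.induce {z | z ≠ y}).IsRegularOfDegree r ∧ (G.induce {z | z ≠ y}) ≠ ⊤
        then 1 else 0) < (if G.IsRegularOfDegree r ∧ G ≠ ⊤ then 1 else 0)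
    rw [if_neg (fun hh => hnotreg hh.1), if_pos ⟨hreg, hne⟩]
    omega
  refine ⟨?_, ?_, ?_, ?_⟩
  · -- property 1
    intro α _ G hc hpos
    have hpos' : 0 < (if G.IsRegularOfDegree r ∧ G ≠ ⊤ then 1 else 0 : ℕ) := hpos
    have hcond : G.IsRegularOfDegree r ∧ G ≠ ⊤ := by
      by_contra hcontra
      rw [if_neg hcontra] at hpos'
      omega
    obtain ⟨hreg, hne⟩ := hcond
    obtain ⟨x₀⟩ := hc.nonempty
    obtain ⟨y, _, _, hcrit⟩ := main α G hc hreg hne x₀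
    exact ⟨y, hcrit, (hreg y).ge⟩
  · -- property 2
    intro α _ G x hc hcrit hdeg
    have h2 := cond_of_lt' (show _ < if G.IsRegularOfDegree r ∧ G ≠ ⊤ then 1 else 0
      from hcrit.2)
    show (if (G.induce {y | y ≠ x}).IsRegularOfDegree r ∧ (G.induce {y | y ≠ x}) ≠ ⊤
        then 1 else 0) = (if G.IsRegularOfDegree r ∧ G ≠ ⊤ then 1 else 0) - 1
    have hm : (if (G.induce {y | y ≠ x}).IsRegularOfDegree r ∧ (G.induce {y | y ≠ x}) ≠ ⊤
        then 1 else 0 : ℕ) = 0 := h2.2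
    rw [hm, if_pos h2.1]
  · -- property 3
    intro α _ G x hc hcrit hdeg
    have h2 := cond_of_lt' (show _ < if G.IsRegularOfDegree r ∧ G ≠ ⊤ then 1 else 0
      from hcrit.2)
    obtain ⟨hreg, hne⟩ := h2.1
    obtain ⟨y, hyx, hmax, hcrity⟩ := main α G hc hreg hne x
    obtain ⟨v, hvx, hvnadj⟩ := exists_nonadj' hreg hne x
    have hdv : 2 ≤ G.dist x v := by
      have h0 : G.dist x v ≠ 0 := fun h => hvx (((hc x v).dist_eq_zero_iff).mp h).symm
      have h1 : G.dist x v ≠ 1 := fun h => hvnadj (SimpleGraph.dist_eq_one_iff_adj.mp h)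
      omega
    have hdy : 2 ≤ G.dist x y := le_trans hdv (hmax v)
    refine ⟨y, hcrity, (hreg y).ge, hyx, fun hadj => ?_⟩
    rw [← SimpleGraph.dist_eq_one_iff_adj] at hadj
    omega
  · -- property 4
    intro α _ G x y hc hpair hdx hdy
    obtain ⟨hxy, -, hcx, hcy⟩ := hpair
    have hregy : (G.induce {z | z ≠ y}).IsRegularOfDegree r :=
      (cond_of_lt' (show _ < if (G.induce {z | z ≠ y}).IsRegularOfDegree r ∧
        (G.induce {z | z ≠ y}) ≠ ⊤ then 1 else 0 from hcx.2)).1.1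
    have hregx : (G.induce {z | z ≠ x}).IsRegularOfDegree r :=
      (cond_of_lt' (show _ < if (G.induce {z | z ≠ x}).IsRegularOfDegree r ∧
        (G.induce {z | z ≠ x}) ≠ ⊤ then 1 else 0 from hcy.2)).1.1
    obtain ⟨z, hz⟩ : ((G.neighborFinset x).erase y).Nonempty :=
      Finset.card_pos.mp (by omega)
    rw [Finset.mem_erase, SimpleGraph.mem_neighborFinset] at hz
    obtain ⟨hzy, hxz⟩ := hz
    have hzx : z ≠ x := hxz.ne'
    have hy : ((G.neighborFinset z).erase y).card = r := by
      have := hregy ⟨z, hzy⟩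
      rwa [degree_induce_ne] at this
    have hx : ((G.neighborFinset z).erase x).card = r := by
      have := hregx ⟨z, hzx⟩
      rwa [degree_induce_ne] at this
    have hxmem : x ∈ G.neighborFinset z := by
      rw [SimpleGraph.mem_neighborFinset]; exact hxz.symm
    rw [Finset.card_erase_of_mem hxmem] at hx
    have hpos : 0 < (G.neighborFinset z).card := Finset.card_pos.mpr ⟨x, hxmem⟩
    have hNz : (G.neighborFinset z).card = r + 1 := by omega
    have hdz : G.degree z = r + 1 := hNz
    have hymem : y ∈ G.neighborFinset z := by
      by_contra hnot
      rw [Finset.erase_eq_of_notMem hnot] at hy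
      omega
    rw [SimpleGraph.mem_neighborFinset] at hymem
    exact ⟨z, hxz, hymem.symm, hdz.ge⟩
end

section
/- Let G be a finite simple graph and let r_1, …, r_k be natural numbers such that r_1 + r_2 + … + r_k ≥ Δ(G) + 2 − k, where Δ(G) denotes the maximum degree of G. For a partition P = (V_1, …, V_k) of V(G), define f(P) to be the sum over i ∈ {1, …, k} of (the number of edges of G[V_i]) − r_i·|V_i|. If P = (V_1, …, V_k) is a partition of V(G) minimizing f(P) over all partitions of V(G) into k parts, then for each i ∈ {1, …, k} the maximum degree of G[V_i] is at most r_i. -/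
open scoped Classical

open Finset

noncomputable def ES {V : Type*} [Fintype V] (G : SimpleGraph V) (S : Finset V) : Finset (Sym2 V) :=
  G.edgeFinset.filter (fun e => ∀ x ∈ e, x ∈ S)

lemma cardA {V : Type*} [Fintype V] (G : SimpleGraph V) (S : Finset V) :
    (G.induce (↑S : Set V)).edgeFinset.card = (ES G S).card := by
  classical
  apply Finset.card_bij (fun e _ => Sym2.map Subtype.val e)
  · intro e he
    induction e with
    | _ a b =>
      simp only [SimpleGraph.mem_edgeFinset, SimpleGraph.mem_edgeSet] at he
      simp only [ES, Sym2.map_pair_eq, mem_filter, SimpleGraph.mem_edgeFinset,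
        SimpleGraph.mem_edgeSet, Sym2.mem_iff]
      constructor
      · exact he
      · rintro x (rfl | rfl)
        · exact a.2
        · exact b.2
  · intro e₁ h₁ e₂ h₂ h
    exact Sym2.map.injective Subtype.val_injective h
  · intro f hf
    simp only [ES, mem_filter, SimpleGraph.mem_edgeFinset, SimpleGraph.mem_edgeSet] at hf
    induction f with
    | _ a b =>
      obtain ⟨hab, hmem⟩ := hf
      have ha : a ∈ S := hmem a (by simp)
      have hb : b ∈ S := hmem b (by simp)
      refine ⟨s(⟨a, ha⟩, ⟨b, hb⟩), ?_, by simp⟩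
      simpa [SimpleGraph.mem_edgeFinset, SimpleGraph.mem_edgeSet] using hab

lemma cardB {V : Type*} [Fintype V] (G : SimpleGraph V) {S : Finset V} {v : V} (hv : v ∉ S) :
    (ES G (insert v S)).card = (ES G S).card + (S.filter (G.Adj v)).card := by
  classical
  have hsplit : ES G (insert v S) = ES G S ∪ (S.filter (G.Adj v)).image (fun w => s(v, w)) := by
    ext e
    simp only [ES, mem_filter, mem_union, mem_image, SimpleGraph.mem_edgeFinset]
    constructor
    · rintro ⟨he, hmem⟩
      induction e with
      | _ a b =>
        rw [SimpleGraph.mem_edgeSet] at he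
        have ha := Finset.mem_insert.mp (hmem a (by simp))
        have hb := Finset.mem_insert.mp (hmem b (by simp))
        by_cases hav : a = v
        · have hbv : b ≠ v := fun h => he.ne (hav.trans h.symm)
          refine Or.inr ⟨b, ⟨hb.resolve_left hbv, ?_⟩, by rw [hav]⟩
          rwa [hav] at he
        · by_cases hbv : b = v
          · refine Or.inr ⟨a, ⟨ha.resolve_left hav, ?_⟩, by rw [hbv, Sym2.eq_swap]⟩
            rw [hbv] at he; exact he.symm
          · exact Or.inl ⟨G.mem_edgeSet.mpr he,
              by rintro x hx; rcases Sym2.mem_iff.mp hx with rfl | rfl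
                 exacts [ha.resolve_left hav, hb.resolve_left hbv]⟩
    · rintro (⟨he, hmem⟩ | ⟨w, hw, rfl⟩)
      · exact ⟨he, fun x hx => Finset.mem_insert_of_mem (hmem x hx)⟩
      · refine ⟨G.mem_edgeSet.mpr hw.2, ?_⟩
        rintro x hx; rcases Sym2.mem_iff.mp hx with rfl | rfl
        exacts [Finset.mem_insert_self _ _, Finset.mem_insert_of_mem hw.1]
  rw [hsplit, Finset.card_union_of_disjoint, Finset.card_image_of_injective]
  · intro a b hab
    exact (Sym2.congr_right.mp hab)
  · rw [Finset.disjoint_left]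
    rintro e he hf
    simp only [mem_image, mem_filter] at hf
    obtain ⟨w, _, rfl⟩ := hf
    simp only [ES, mem_filter] at he
    exact hv (he.2 v (by simp))

lemma cardD {V : Type*} [Fintype V] (G : SimpleGraph V) {S : Finset V} {v : V} (hv : v ∈ S) :
    (G.induce (↑S : Set V)).degree ⟨v, hv⟩ = (S.filter (G.Adj v)).card := by
  classical
  rw [SimpleGraph.degree]
  refine Finset.card_bij (fun w _ => (w : V)) ?_ ?_ ?_
  · intro w hw
    simp only [SimpleGraph.mem_neighborFinset] at hw
    exact mem_filter.mpr ⟨w.2, hw⟩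
  · intro a _ b _ h; exact Subtype.ext h
  · intro w hw
    simp only [mem_filter] at hw
    refine ⟨⟨w, hw.1⟩, ?_, rfl⟩
    rw [SimpleGraph.mem_neighborFinset]
    exact hw.2


/-- If `r₁ + ⋯ + r_k ≥ Δ(G) + 2 - k` and `P = (V₁, …, V_k)` is a partition of `V(G)`
minimizing `f(P) = ∑ᵢ (‖G[Vᵢ]‖ - rᵢ·|Vᵢ|)` over all partitions of `V(G)` into `k` parts,
then `Δ(G[Vᵢ]) ≤ rᵢ` for each `i`. -/
theorem maxDegree_le_of_min_f {V : Type*} [Fintype V] (G : SimpleGraph V)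
    (k : ℕ) (r : Fin k → ℕ)
    (hsum : G.maxDegree + 2 ≤ ∑ i, r i + k)
    (P : Fin k → Finset V)
    (hdisj : ∀ i j, i ≠ j → Disjoint (P i) (P j))
    (hcover : ∀ v : V, ∃ i, v ∈ P i)
    (hmin : ∀ Q : Fin k → Finset V,
      (∀ i j, i ≠ j → Disjoint (Q i) (Q j)) → (∀ v : V, ∃ i, v ∈ Q i) →
      ∑ i, (((G.induce (↑(P i) : Set V)).edgeFinset.card : ℤ) - r i * (P i).card) ≤
        ∑ i, (((G.induce (↑(Q i) : Set V)).edgeFinset.card : ℤ) - r i * (Q i).card)) :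
    ∀ i : Fin k, (G.induce (↑(P i) : Set V)).maxDegree ≤ r i := by
  classical
  intro i
  apply SimpleGraph.maxDegree_le_of_forall_degree_le
  rintro ⟨x, hx⟩
  by_contra hdeg
  push_neg at hdeg
  have hxP : x ∈ P i := hx
  set d : Fin k → ℕ := fun l => ((P l).filter (G.Adj x)).card with hd
  have hdi : r i + 1 ≤ d i := by
    have h1 := cardD G hxP
    have h2 : (⟨x, hx⟩ : (↑(P i) : Set V)) = ⟨x, hxP⟩ := rfl
    rw [h2, h1] at hdeg
    exact hdeg
  -- total degree of x equals sum of d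
  have hdegsum : ∑ l, d l = G.degree x := by
    rw [SimpleGraph.degree, SimpleGraph.neighborFinset_eq_filter]
    have huniv : (Finset.univ : Finset V) = Finset.univ.biUnion P := by
      apply Finset.Subset.antisymm
      · intro v _
        obtain ⟨l, hl⟩ := hcover v
        exact Finset.mem_biUnion.mpr ⟨l, Finset.mem_univ l, hl⟩
      · exact Finset.subset_univ _
    rw [huniv, Finset.filter_biUnion, Finset.card_biUnion]
    intro a _ b _ hab
    exact Finset.disjoint_filter_filter (hdisj a b hab)
  -- find a part j with d j ≤ r j
  have hexj : ∃ j, d j ≤ r j := by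
    by_contra hcon
    push_neg at hcon
    have h1 : ∑ l, (r l + 1) ≤ ∑ l, d l := Finset.sum_le_sum fun l _ => hcon l
    rw [Finset.sum_add_distrib, Finset.sum_const, Finset.card_univ, Fintype.card_fin,
      smul_eq_mul, mul_one] at h1
    have h2 := G.degree_le_maxDegree x
    omega
  obtain ⟨j, hj⟩ := hexj
  have hji : j ≠ i := by
    rintro rfl
    omega
  have hxPj : x ∉ P j := fun h => (hdisj i j hji.symm).forall_ne_finset hxP h rfl
  -- the improved partition
  set Q : Fin k → Finset V := fun l =>
    if l = i then (P i).erase x else if l = j then insert x (P j) else P l with hQ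
  have hQsub : ∀ l, l ≠ j → Q l ⊆ P l := by
    intro l hl
    rw [hQ]
    by_cases h : l = i
    · subst h; simp [Finset.erase_subset]
    · simp [h, hl]
  have hxQ : ∀ l, l ≠ j → x ∉ Q l := by
    intro l hl
    rw [hQ]
    by_cases h : l = i
    · subst h; simp
    · simp only [h, hl, if_false]
      exact fun hmem => (hdisj i l (Ne.symm h)).forall_ne_finset hxP hmem rfl
  have hQj : Q j = insert x (P j) := by rw [hQ]; simp [hji]
  have hQi : Q i = (P i).erase x := by rw [hQ]; simp
  have hQdisj : ∀ a b, a ≠ b → Disjoint (Q a) (Q b) := by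
    intro a b hab
    by_cases haj : a = j
    · subst haj
      rw [hQj]
      rw [Finset.disjoint_insert_left]
      exact ⟨hxQ b (Ne.symm hab), ((hdisj a b hab).mono_right (hQsub b (Ne.symm hab)))⟩
    · by_cases hbj : b = j
      · subst hbj
        rw [hQj, Finset.disjoint_insert_right]
        exact ⟨hxQ a haj, ((hdisj a b hab).mono_left (hQsub a haj))⟩
      · exact (hdisj a b hab).mono (hQsub a haj) (hQsub b hbj)
  have hQcover : ∀ v : V, ∃ l, v ∈ Q l := by
    intro v
    by_cases hvx : v = x
    · exact ⟨j, by rw [hQj, hvx]; exact Finset.mem_insert_self _ _⟩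
    · obtain ⟨l, hl⟩ := hcover v
      by_cases hli : l = i
      · subst hli
        exact ⟨l, by rw [hQi]; exact Finset.mem_erase.mpr ⟨hvx, hl⟩⟩
      · by_cases hlj : l = j
        · subst hlj
          exact ⟨l, by rw [hQj]; exact Finset.mem_insert_of_mem hl⟩
        · exact ⟨l, by rw [hQ]; simp only [hli, hlj, if_false]; exact hl⟩
  -- edge counts
  have hci : ((G.induce (↑(P i) : Set V)).edgeFinset.card : ℤ)
      = ((G.induce (↑(Q i) : Set V)).edgeFinset.card : ℤ) + d i := by
    have h1 : (ES G (P i)).card = (ES G (Q i)).card + d i := by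
      have hx1 : x ∉ (P i).erase x := Finset.notMem_erase x _
      have h2 := cardB G hx1
      rw [Finset.insert_erase hxP] at h2
      rw [hQi, h2]
      congr 1
      rw [hd]
      congr 1
      rw [Finset.filter_erase, Finset.erase_eq_of_notMem]
      simp [G.irrefl]
    rw [cardA, cardA, h1]
    push_cast
    ring
  have hcj : ((G.induce (↑(Q j) : Set V)).edgeFinset.card : ℤ)
      = ((G.induce (↑(P j) : Set V)).edgeFinset.card : ℤ) + d j := by
    rw [cardA, cardA, hQj, cardB G hxPj]
    push_cast
    ring
  have hcardi : ((Q i).card : ℤ) = (P i).card - 1 := by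
    have h1 : 1 ≤ (P i).card := Finset.card_pos.mpr ⟨x, hxP⟩
    rw [hQi, Finset.card_erase_of_mem hxP, Nat.cast_sub h1, Nat.cast_one]
  have hcardj : ((Q j).card : ℤ) = (P j).card + 1 := by
    rw [hQj, Finset.card_insert_of_notMem hxPj]
    push_cast
    ring
  -- sum comparison
  have hkey := hmin Q hQdisj hQcover
  set F : Fin k → ℤ := fun l =>
    ((G.induce (↑(P l) : Set V)).edgeFinset.card : ℤ) - r l * (P l).card with hF
  set FQ : Fin k → ℤ := fun l =>
    ((G.induce (↑(Q l) : Set V)).edgeFinset.card : ℤ) - r l * (Q l).card with hFQ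
  have hdiff : ∑ l, FQ l - ∑ l, F l = (FQ i - F i) + (FQ j - F j) := by
    rw [← Finset.sum_sub_distrib]
    rw [← Finset.sum_subset (Finset.subset_univ ({i, j} : Finset (Fin k)))]
    · rw [Finset.sum_pair (Ne.symm hji)]
    · intro l _ hl
      simp only [Finset.mem_insert, Finset.mem_singleton, not_or] at hl
      have : Q l = P l := by rw [hQ]; simp [hl.1, hl.2]
      rw [hFQ, hF]
      simp only
      rw [this]
      ring
  have hgi : FQ i - F i = (r i : ℤ) - d i := by
    rw [hFQ, hF]
    simp only
    rw [hci, hcardi]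
    ring
  have hgj : FQ j - F j = (d j : ℤ) - r j := by
    rw [hFQ, hF]
    simp only
    rw [hcj, hcardj]
    ring
  have hneg : ∑ l, FQ l ≤ ∑ l, F l - 1 := by
    have hd1 : (r i : ℤ) + 1 ≤ d i := by exact_mod_cast hdi
    have hd2 : (d j : ℤ) ≤ r j := by exact_mod_cast hj
    have := hdiff
    rw [hgi, hgj] at this
    linarith
  linarith [hkey]
end
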